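/- Let m ≥ 2, k ∈ {1,…,m−1}, and let A ⊆ {1,…,2^m−1} be a set of 2^k consecutive integers. Then every gap of the set ψ(A) ∪ {0,1} is at most 7/2^{k+2}, where ψ(n) = Σ_{i=1}^m ((e_{i−1} + e_i) mod 2)/2^i with e₀ := 0. -/

import Mathlib

/-- The `i`-th digit (1-based) of `n` in base `b`, with the convention that the
`0`-th digit is `0`. -/
def nthDigit (b n i : ℕ) : ℕ := if i = 0 then 0 else n / b ^ (i - 1) % b
/-- The map `ψ(n) = Σ_{i=1}^m ((e_{i-1} + e_i) mod 2)/2^i` with the convention `e₀ = 0`. -/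
noncomputable def psiMap (m n : ℕ) : ℝ :=
  ∑ i ∈ Finset.Icc 1 m,
    (((nthDigit 2 n (i - 1) + nthDigit 2 n i) % 2 : ℕ) : ℝ) / (2 : ℝ) ^ i

/-- digit of the Gray-type expansion -/
def dg (n i : ℕ) : ℕ := (nthDigit 2 n (i - 1) + nthDigit 2 n i) % 2

lemma dg_le_one (n i : ℕ) : dg n i ≤ 1 := Nat.lt_succ_iff.mp (Nat.mod_lt _ (by norm_num))

lemma nthDigit_le_one (n i : ℕ) : nthDigit 2 n i ≤ 1 := by
  unfold nthDigit
  split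
  · omega
  · exact Nat.lt_succ_iff.mp (Nat.mod_lt _ (by norm_num))

lemma nthDigit_mod {i k : ℕ} (h : i ≤ k) (n : ℕ) :
    nthDigit 2 (n % 2 ^ k) i = nthDigit 2 n i := by
  unfold nthDigit
  rcases Nat.eq_zero_or_pos i with hi | hi
  · simp [hi]
  rw [if_neg (by omega), if_neg (by omega)]
  have hk : 2 ^ k = 2 ^ (i-1) * 2 ^ (k - i + 1) := by
    rw [← pow_add]; congr 1; omega
  rw [hk, Nat.mod_mul_right_div_self]
  exact Nat.mod_mod_of_dvd _ (dvd_pow_self 2 (by omega))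

lemma nthDigit_div {i : ℕ} (h : 1 ≤ i) (n c : ℕ) :
    nthDigit 2 (n / 2 ^ c) i = nthDigit 2 n (i + c) := by
  unfold nthDigit
  rw [if_neg (by omega), if_neg (by omega), Nat.div_div_eq_div_mul, ← pow_add]
  have : c + (i - 1) = i + c - 1 := by omega
  rw [this]

lemma dg_mod {i k : ℕ} (h : i ≤ k) (n : ℕ) : dg (n % 2 ^ k) i = dg n i := by
  unfold dg
  rw [nthDigit_mod (by omega), nthDigit_mod h]

lemma dg_div {i : ℕ} (h : 2 ≤ i) (n c : ℕ) : dg (n / 2 ^ c) i = dg n (i + c) := by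
  unfold dg
  rw [nthDigit_div (by omega), nthDigit_div (by omega)]
  congr 3
  omega

/-- reconstruction of a number from its binary digits -/
lemma bits_recon (k : ℕ) : ∀ n : ℕ, ∑ i ∈ Finset.Ioc 0 k, nthDigit 2 n i * 2 ^ (i - 1) = n % 2 ^ k := by
  induction k with
  | zero => intro n; simp [Nat.mod_one]
  | succ k ih =>
      intro n
      rw [Finset.sum_Ioc_succ_top (by omega)]
      have h1 : nthDigit 2 n (k+1) = n / 2 ^ k % 2 := by
        unfold nthDigit
        rw [if_neg (by omega)]
        norm_num
      have h2 : n % 2 ^ (k+1) = n % 2 ^ k + 2 ^ k * (n / 2 ^ k % 2) := by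
        rw [pow_succ, Nat.mod_mul]
      have h3 : (k+1) - 1 = k := by omega
      rw [ih n, h1, h2, h3]
      ring

/-- the bit-reversed Gray code value determined by the low `k` bits -/
def grayN (k u : ℕ) : ℕ := ∑ i ∈ Finset.Ioc 0 k, dg u i * 2 ^ (k - i)

lemma rem_bound (f : ℕ → ℕ) (hf : ∀ i, f i ≤ 1) (j : ℕ) :
    ∀ k, ∑ i ∈ Finset.Ioc j k, f i * 2 ^ (k - i) ≤ 2 ^ (k - j) - 1 := by
  intro k
  induction k with
  | zero => simp
  | succ k ih =>
      rcases le_or_gt (k+1) j with h | h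
      · rw [Finset.Ioc_eq_empty (by omega)]
        simp
      · rw [Finset.sum_Ioc_succ_top (by omega)]
        have e1 : ∑ i ∈ Finset.Ioc j k, f i * 2 ^ (k + 1 - i)
            = 2 * ∑ i ∈ Finset.Ioc j k, f i * 2 ^ (k - i) := by
          rw [Finset.mul_sum]
          apply Finset.sum_congr rfl
          intro i hi
          simp only [Finset.mem_Ioc] at hi
          have : k + 1 - i = (k - i) + 1 := by omega
          rw [this, pow_succ]
          ring
        have e2 : k + 1 - (k+1) = 0 := by omega
        have e3 : k + 1 - j = (k - j) + 1 := by omega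
        have h4 := hf (k+1)
        have h5 : 1 ≤ 2 ^ (k - j) := Nat.one_le_two_pow
        rw [e1, e2, e3, pow_succ]
        have := ih
        omega

lemma grayN_lt (k u : ℕ) : grayN k u < 2 ^ k := by
  have := rem_bound (fun i => dg u i) (fun i => dg_le_one u i) 0 k
  have h5 : 1 ≤ 2 ^ k := Nat.one_le_two_pow
  unfold grayN
  simp only [Nat.sub_zero] at this
  omega

lemma grayN_digit {j k : ℕ} (hj : 1 ≤ j) (hjk : j ≤ k) (u : ℕ) :
    grayN k u / 2 ^ (k - j) % 2 = dg u j := by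
  have hsplit : ∑ i ∈ Finset.Ioc 0 j, dg u i * 2 ^ (k - i)
      + ∑ i ∈ Finset.Ioc j k, dg u i * 2 ^ (k - i) = grayN k u :=
    Finset.sum_Ioc_consecutive _ (by omega) hjk
  have e1 : ∑ i ∈ Finset.Ioc 0 j, dg u i * 2 ^ (k - i)
      = 2 ^ (k - j) * ∑ i ∈ Finset.Ioc 0 j, dg u i * 2 ^ (j - i) := by
    rw [Finset.mul_sum]
    apply Finset.sum_congr rfl
    intro i hi
    simp only [Finset.mem_Ioc] at hi
    have : k - i = (k - j) + (j - i) := by omega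
    rw [this, pow_add]
    ring
  have hr : ∑ i ∈ Finset.Ioc j k, dg u i * 2 ^ (k - i) ≤ 2 ^ (k - j) - 1 :=
    rem_bound _ (fun i => dg_le_one u i) j k
  have hpos : 0 < 2 ^ (k - j) := Nat.pow_pos (by norm_num)
  have hdiv : grayN k u / 2 ^ (k - j) = ∑ i ∈ Finset.Ioc 0 j, dg u i * 2 ^ (j - i) := by
    rw [← hsplit, e1, Nat.mul_add_div hpos]
    rw [Nat.div_eq_of_lt (by omega)]
    omega
  -- now the mod 2 of the prefix sum
  have hpeel : ∑ i ∈ Finset.Ioc 0 j, dg u i * 2 ^ (j - i)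
      = (∑ i ∈ Finset.Ioc 0 (j-1), dg u i * 2 ^ (j - i)) + dg u j := by
    have hj' : j = (j - 1) + 1 := by omega
    rw [hj']
    rw [Finset.sum_Ioc_succ_top (by omega)]
    simp
  have e2 : ∑ i ∈ Finset.Ioc 0 (j-1), dg u i * 2 ^ (j - i)
      = 2 * ∑ i ∈ Finset.Ioc 0 (j-1), dg u i * 2 ^ (j - 1 - i) := by
    rw [Finset.mul_sum]
    apply Finset.sum_congr rfl
    intro i hi
    simp only [Finset.mem_Ioc] at hi
    have : j - i = (j - 1 - i) + 1 := by omega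
    rw [this, pow_succ]
    ring
  have hd := dg_le_one u j
  rw [hdiv, hpeel, e2]
  omega

lemma grayN_inj {k u v : ℕ} (hu : u < 2 ^ k) (hv : v < 2 ^ k)
    (h : grayN k u = grayN k v) : u = v := by
  have hdg : ∀ j, 1 ≤ j → j ≤ k → dg u j = dg v j := by
    intro j hj hjk
    rw [← grayN_digit hj hjk u, ← grayN_digit hj hjk v, h]
  have hbits : ∀ j, j ≤ k → nthDigit 2 u j = nthDigit 2 v j := by
    intro j
    induction j with
    | zero => intro _; rfl
    | succ j ih =>
        intro hjk
        have h1 := hdg (j+1) (by omega) hjk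
        have h2 := ih (by omega)
        unfold dg at h1
        simp only [Nat.add_sub_cancel] at h1
        have b1 := nthDigit_le_one u j
        have b2 := nthDigit_le_one v j
        have b3 := nthDigit_le_one u (j+1)
        have b4 := nthDigit_le_one v (j+1)
        omega
  have hu' : u % 2 ^ k = u := Nat.mod_eq_of_lt hu
  have hv' : v % 2 ^ k = v := Nat.mod_eq_of_lt hv
  rw [← hu', ← hv', ← bits_recon k u, ← bits_recon k v]
  apply Finset.sum_congr rfl
  intro i hi
  simp only [Finset.mem_Ioc] at hi
  rw [hbits i hi.2]

lemma mod_inj_on_Ico {k a n n' : ℕ} (hn : a ≤ n ∧ n < a + 2 ^ k)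
    (hn' : a ≤ n' ∧ n' < a + 2 ^ k) (h : n % 2 ^ k = n' % 2 ^ k) : n = n' := by
  have e1 := Nat.div_add_mod n (2 ^ k)
  have e2 := Nat.div_add_mod n' (2 ^ k)
  have hpos : 0 < 2 ^ k := Nat.pow_pos (by norm_num)
  rcases lt_trichotomy (n / 2 ^ k) (n' / 2 ^ k) with hq | hq | hq
  · have : n + 2 ^ k ≤ n' := by
      have : n / 2 ^ k + 1 ≤ n' / 2 ^ k := hq
      nlinarith [Nat.mul_le_mul_left (2 ^ k) this]
    omega
  · rw [hq, h] at e1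
    omega
  · have : n' + 2 ^ k ≤ n := by
      have : n' / 2 ^ k + 1 ≤ n / 2 ^ k := hq
      nlinarith [Nat.mul_le_mul_left (2 ^ k) this]
    omega

lemma gray_surj (k a : ℕ) {w : ℕ} (hw : w < 2 ^ k) :
    ∃ n, (a ≤ n ∧ n < a + 2 ^ k) ∧ grayN k (n % 2 ^ k) = w := by
  classical
  set B := Finset.Ico a (a + 2 ^ k) with hB
  set f : ℕ → ℕ := fun n => grayN k (n % 2 ^ k) with hf
  have hinj : Set.InjOn f ↑B := by
    intro n hn n' hn' hfe
    simp only [hB, Finset.coe_Ico, Set.mem_Ico] at hn hn'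
    have hmod : n % 2 ^ k = n' % 2 ^ k :=
      grayN_inj (Nat.mod_lt _ (Nat.pow_pos (by norm_num)))
        (Nat.mod_lt _ (Nat.pow_pos (by norm_num))) hfe
    exact mod_inj_on_Ico ⟨hn.1, hn.2⟩ ⟨hn'.1, hn'.2⟩ hmod
  have hsub : B.image f ⊆ Finset.range (2 ^ k) := by
    intro x hx
    simp only [Finset.mem_image] at hx
    obtain ⟨n, _, rfl⟩ := hx
    exact Finset.mem_range.mpr (grayN_lt _ _)
  have hcard : (B.image f).card = 2 ^ k := by
    rw [Finset.card_image_of_injOn hinj, hB, Nat.card_Ico]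
    omega
  have : B.image f = Finset.range (2 ^ k) :=
    Finset.eq_of_subset_of_card_le hsub (by rw [hcard, Finset.card_range])
  have hwmem : w ∈ B.image f := by
    rw [this]
    exact Finset.mem_range.mpr hw
  simp only [Finset.mem_image, hB, Finset.mem_Ico] at hwmem
  obtain ⟨n, hn, hfn⟩ := hwmem
  exact ⟨n, ⟨hn.1, hn.2⟩, hfn⟩

noncomputable def deltaR (m k n : ℕ) : ℝ := ∑ i ∈ Finset.Ioc k m, (dg n i : ℝ) / 2 ^ i

lemma psi_eq (m n : ℕ) : psiMap m n = ∑ i ∈ Finset.Ioc 0 m, (dg n i : ℝ) / 2 ^ i := by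
  rw [psiMap, ← Finset.Icc_add_one_left_eq_Ioc]
  rfl

lemma nthDigit_eq {i : ℕ} (h : 1 ≤ i) (n : ℕ) : nthDigit 2 n i = n / 2 ^ (i-1) % 2 := by
  unfold nthDigit
  rw [if_neg (by omega)]

lemma grayN_mod_free (k n : ℕ) :
    grayN k (n % 2 ^ k) = ∑ i ∈ Finset.Ioc 0 k, dg n i * 2 ^ (k - i) := by
  unfold grayN
  apply Finset.sum_congr rfl
  intro i hi
  simp only [Finset.mem_Ioc] at hi
  rw [dg_mod hi.2]

lemma psi_decomp {m k : ℕ} (h : k ≤ m) (n : ℕ) :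
    psiMap m n = (grayN k (n % 2 ^ k) : ℝ) / 2 ^ k + deltaR m k n := by
  rw [psi_eq, ← Finset.sum_Ioc_consecutive _ (Nat.zero_le k) h, deltaR]
  congr 1
  rw [grayN_mod_free]
  push_cast
  rw [Finset.sum_div]
  apply Finset.sum_congr rfl
  intro i hi
  simp only [Finset.mem_Ioc] at hi
  have h2 : (2:ℝ) ^ (k-i) * 2 ^ i = 2 ^ k := by
    rw [← pow_add]; congr 1; omega
  rw [div_eq_div_iff (by positivity) (by positivity), mul_assoc, h2]

lemma geom_Ioc : ∀ m j : ℕ, j ≤ m →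
    ∑ i ∈ Finset.Ioc j m, ((2:ℝ) ^ i)⁻¹ = ((2:ℝ) ^ j)⁻¹ - ((2:ℝ) ^ m)⁻¹ := by
  intro m
  induction m with
  | zero => intro j hj; interval_cases j; simp
  | succ m ih =>
      intro j hj
      rcases eq_or_lt_of_le hj with h | h
      · rw [h, Finset.Ioc_self]
        simp
      · have hjm : j ≤ m := by omega
        rw [Finset.sum_Ioc_succ_top hjm, ih j hjm]
        have hm : (2:ℝ) ^ m ≠ 0 := by positivity
        rw [pow_succ]
        field_simp
        ring

lemma delta_nonneg (m k n : ℕ) : 0 ≤ deltaR m k n :=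
  Finset.sum_nonneg (fun i _ => by positivity)

lemma delta_lt {m k : ℕ} (h : k ≤ m) (n : ℕ) : deltaR m k n < ((2:ℝ) ^ k)⁻¹ := by
  have hle : deltaR m k n ≤ ((2:ℝ) ^ k)⁻¹ - ((2:ℝ) ^ m)⁻¹ := by
    rw [deltaR, ← geom_Ioc m k h]
    apply Finset.sum_le_sum
    intro i hi
    have hd : (dg n i : ℝ) ≤ 1 := by exact_mod_cast dg_le_one n i
    rw [div_eq_mul_inv]
    nlinarith [inv_nonneg.mpr (le_of_lt (show (0:ℝ) < 2 ^ i by positivity))]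
  have : (0:ℝ) < ((2:ℝ) ^ m)⁻¹ := by positivity
  linarith

lemma Ioc_succ_singleton (k : ℕ) : Finset.Ioc k (k+1) = {k+1} := by
  rw [← Finset.Icc_add_one_left_eq_Ioc]
  exact Finset.Icc_self (k+1)

lemma delta_split {m k : ℕ} (h : k + 2 ≤ m) (n : ℕ) :
    deltaR m k n = (dg n (k+1) : ℝ) / 2 ^ (k+1) + (dg n (k+2) : ℝ) / 2 ^ (k+2)
      + deltaR m (k+2) n := by
  rw [deltaR, deltaR, ← Finset.sum_Ioc_consecutive _ (show k ≤ k+2 by omega) h]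
  congr 1
  rw [show k + 2 = (k+1) + 1 from rfl, Finset.sum_Ioc_succ_top (by omega),
    Ioc_succ_singleton, Finset.sum_singleton]

lemma R_congr {m k n n' : ℕ} (h : n / 2 ^ (k+1) = n' / 2 ^ (k+1)) :
    deltaR m (k+2) n = deltaR m (k+2) n' := by
  rw [deltaR, deltaR]
  apply Finset.sum_congr rfl
  intro i hi
  simp only [Finset.mem_Ioc] at hi
  have e : i - (k+1) + (k+1) = i := by omega
  have d1 : dg (n / 2 ^ (k+1)) (i - (k+1)) = dg n i := by
    rw [dg_div (by omega), e]
  have d2 : dg (n' / 2 ^ (k+1)) (i - (k+1)) = dg n' i := by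
    rw [dg_div (by omega), e]
  rw [← d1, ← d2, h]

lemma dg_k2_eq (k n : ℕ) :
    dg n (k+2) = ((n / 2 ^ k) % 2 + (n / 2 ^ k / 2) % 2) % 2 := by
  unfold dg
  rw [show (k+2) - 1 = k+1 from rfl, nthDigit_eq (show 1 ≤ k+1 by omega),
    nthDigit_eq (show 1 ≤ k+2 by omega), show (k+1) - 1 = k from rfl,
    show (k+2) - 1 = k+1 from rfl, pow_succ, ← Nat.div_div_eq_div_mul]

lemma div_ineq (D a b r r' : ℝ) (hD : 0 < D) (h : a + r' * D ≤ b + r * D + 3) :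
    a / D + r' ≤ b / D + r + 3 / D := by
  have hne : D ≠ 0 := ne_of_gt hD
  have e1 : a / D + r' = (a + r' * D) / D := by field_simp
  have e2 : b / D + r + 3 / D = (b + r * D + 3) / D := by field_simp
  rw [e1, e2]
  gcongr

lemma delta_comp (m k n n' : ℕ) (hk : k + 1 ≤ m)
    (h1 : n / 2 ^ k ≤ n' / 2 ^ k + 1) (h2 : n' / 2 ^ k ≤ n / 2 ^ k + 1) :
    deltaR m k n' ≤ deltaR m k n + 3 / (2:ℝ) ^ (k+2) := by
  have hp1 : (0:ℝ) < 2 ^ (k+1) := by positivity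
  have hp2 : (0:ℝ) < 2 ^ (k+2) := by positivity
  have hpow : (2:ℝ) ^ (k+2) = 2 ^ (k+1) * 2 := pow_succ 2 (k+1)
  rcases lt_or_ge m (k+2) with hm2 | hm2
  · -- m = k+1, trivial bound
    have hm : m = k + 1 := by omega
    subst hm
    have hsing : deltaR (k+1) k n' = (dg n' (k+1) : ℝ) / 2 ^ (k+1) := by
      rw [deltaR, Ioc_succ_singleton, Finset.sum_singleton]
    have hd : (dg n' (k+1) : ℝ) ≤ 1 := by exact_mod_cast dg_le_one n' (k+1)
    have h0 := delta_nonneg (k+1) k n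
    have e : (1:ℝ) / 2 ^ (k+1) = 2 / 2 ^ (k+2) := by
      rw [hpow]; ring
    have hb : (dg n' (k+1) : ℝ) / 2 ^ (k+1) ≤ 1 / 2 ^ (k+1) := by gcongr
    rw [hsing]
    rw [e] at hb
    have h23 : (2:ℝ) / 2 ^ (k+2) ≤ 3 / 2 ^ (k+2) := by gcongr <;> norm_num
    linarith
  · -- main case
    have hs := delta_split hm2 n
    have hs' := delta_split hm2 n'
    have hR0 : 0 ≤ deltaR m (k+2) n := delta_nonneg m (k+2) n
    have hR0' : 0 ≤ deltaR m (k+2) n' := delta_nonneg m (k+2) n'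
    have hRD0 : 0 ≤ deltaR m (k+2) n * 2 ^ (k+2) := mul_nonneg hR0 (le_of_lt hp2)
    have hRD0' : 0 ≤ deltaR m (k+2) n' * 2 ^ (k+2) := mul_nonneg hR0' (le_of_lt hp2)
    have hRD' : deltaR m (k+2) n' * 2 ^ (k+2) < 1 := by
      have h := delta_lt hm2 n'
      rw [← one_div] at h
      exact (lt_div_iff₀ hp2).mp h
    have hc1' := dg_le_one n' (k+1)
    have hc2' := dg_le_one n' (k+2)
    have hc1 := dg_le_one n (k+1)
    have hc2 := dg_le_one n (k+2)
    have ediv : ∀ c : ℕ, (c : ℝ) / 2 ^ (k+1) = 2 * c / 2 ^ (k+2) := by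
      intro c
      rw [hpow]
      ring
    rw [hs, hs', ediv, ediv, ← add_div, ← add_div]
    apply div_ineq _ _ _ _ _ hp2
    by_cases hboth : dg n' (k+1) = 1 ∧ dg n' (k+2) = 1
    · by_cases hzero : dg n (k+1) = 0 ∧ dg n (k+2) = 0
      · -- crucial case: tails agree
        have hk2 := dg_k2_eq k n
        have hk2' := dg_k2_eq k n'
        have hNdiv : n / 2 ^ k / 2 = n' / 2 ^ k / 2 := by
          rw [hzero.2] at hk2
          rw [hboth.2] at hk2'
          omega
        have hdivk1 : n / 2 ^ (k+1) = n' / 2 ^ (k+1) := by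
          rw [pow_succ, ← Nat.div_div_eq_div_mul, ← Nat.div_div_eq_div_mul]
          exact hNdiv
        have hReq := R_congr (m := m) hdivk1
        rw [hboth.1, hboth.2, hzero.1, hzero.2, hReq]
        push_cast
        linarith
      · -- c(n) ≥ 1
        have hge : (1:ℝ) ≤ 2 * (dg n (k+1) : ℕ) + (dg n (k+2) : ℕ) := by
          have : 1 ≤ 2 * dg n (k+1) + dg n (k+2) := by omega
          exact_mod_cast this
        rw [hboth.1, hboth.2]
        push_cast
        linarith
    · -- c(n') ≤ 2
      have hle2 : (2 * (dg n' (k+1) : ℕ) + (dg n' (k+2) : ℕ) : ℝ) ≤ 2 := by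
        have : 2 * dg n' (k+1) + dg n' (k+2) ≤ 2 := by omega
        exact_mod_cast this
      have t1 : (0:ℝ) ≤ (dg n (k+1) : ℝ) := by positivity
      have t2 : (0:ℝ) ≤ (dg n (k+2) : ℝ) := by positivity
      push_cast at hle2 ⊢
      linarith

lemma psi_nonneg (m n : ℕ) : 0 ≤ psiMap m n := by
  rw [psi_eq]
  exact Finset.sum_nonneg (fun i _ => by positivity)

lemma psi_lt_one (m n : ℕ) : psiMap m n < 1 := by
  rw [psi_eq]
  have hle : ∑ i ∈ Finset.Ioc 0 m, (dg n i : ℝ) / 2 ^ i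
      ≤ ∑ i ∈ Finset.Ioc 0 m, ((2:ℝ) ^ i)⁻¹ := by
    apply Finset.sum_le_sum
    intro i hi
    have hd : (dg n i : ℝ) ≤ 1 := by exact_mod_cast dg_le_one n i
    rw [div_eq_mul_inv]
    nlinarith [inv_nonneg.mpr (le_of_lt (show (0:ℝ) < 2 ^ i by positivity))]
  rw [geom_Ioc m 0 (Nat.zero_le m)] at hle
  have : (0:ℝ) < ((2:ℝ) ^ m)⁻¹ := by positivity
  simp only [pow_zero, inv_one] at hle
  linarith

lemma psi_pos {m n : ℕ} (h1 : 1 ≤ n) (h2 : n < 2 ^ m) : 0 < psiMap m n := by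
  have h0 : 0 ≤ psiMap m n := psi_nonneg m n
  rcases eq_or_lt_of_le h0 with he | h
  · exfalso
    rw [psi_eq] at he
    have hz : ∀ i ∈ Finset.Ioc 0 m, (dg n i : ℝ) / 2 ^ i = 0 := by
      intro i hi
      have := (Finset.sum_eq_zero_iff_of_nonneg (fun i _ => by positivity)).mp he.symm
      exact this i hi
    have hdg : ∀ i, 1 ≤ i → i ≤ m → dg n i = 0 := by
      intro i hi1 hi2
      have := hz i (Finset.mem_Ioc.mpr ⟨hi1, hi2⟩)
      have hp : (0:ℝ) < 2 ^ i := by positivity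
      field_simp at this
      exact_mod_cast this
    have hbit : ∀ i, i ≤ m → nthDigit 2 n i = 0 := by
      intro i
      induction i with
      | zero => intro _; rfl
      | succ i ih =>
          intro hi
          have h1' := hdg (i+1) (by omega) hi
          have h2' := ih (by omega)
          unfold dg at h1'
          simp only [Nat.add_sub_cancel] at h1'
          have b1 := nthDigit_le_one n i
          have b2 := nthDigit_le_one n (i+1)
          omega
    have := bits_recon m n
    rw [Nat.mod_eq_of_lt h2] at this
    have hsum0 : ∑ i ∈ Finset.Ioc 0 m, nthDigit 2 n i * 2 ^ (i-1) = 0 := by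
      apply Finset.sum_eq_zero
      intro i hi
      simp only [Finset.mem_Ioc] at hi
      rw [hbit i hi.2]
      ring
    omega
  · exact h

lemma key (m k a : ℕ) (hm : 2 ≤ m) (hk1 : 1 ≤ k) (hkm : k ≤ m - 1) (ha1 : 1 ≤ a)
    (ha2 : a + 2 ^ k ≤ 2 ^ m) (S : Set ℝ)
    (hS : S = {0, 1} ∪ (fun n => psiMap m n) '' {n : ℕ | a ≤ n ∧ n < a + 2 ^ k}) :
    ∀ x ∈ S, x < 1 → ∃ y ∈ S, x < y ∧ y ≤ x + 7 / (2:ℝ) ^ (k + 2) := by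
  have hkm' : k + 1 ≤ m := by omega
  have hk_le : k ≤ m := by omega
  have hpk : (0:ℝ) < 2 ^ k := by positivity
  have hpk2 : (0:ℝ) < 2 ^ (k+2) := by positivity
  have einv4 : ((2:ℝ) ^ k)⁻¹ = 4 / (2:ℝ) ^ (k+2) := by
    rw [show (2:ℝ) ^ (k+2) = 2 ^ k * 4 by rw [pow_add]; norm_num]
    field_simp
  have h47 : (4:ℝ) / 2 ^ (k+2) ≤ 7 / 2 ^ (k+2) := by gcongr <;> norm_num
  have h1S : (1:ℝ) ∈ S := by rw [hS]; left; simp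
  intro x hx hx1
  rw [hS] at hx
  rcases hx with hx01 | himg
  · -- x = 0 (x = 1 is excluded)
    have hx0 : x = 0 := by
      rcases hx01 with h | h
      · exact h
      · exfalso; simp only [Set.mem_singleton_iff] at h; rw [h] at hx1; linarith
    subst hx0
    obtain ⟨n0, hn0, hg0⟩ := gray_surj k a (show 0 < 2 ^ k by positivity)
    refine ⟨psiMap m n0, ?_, ?_, ?_⟩
    · rw [hS]; right; exact ⟨n0, ⟨hn0.1, hn0.2⟩, rfl⟩
    · exact psi_pos (by omega) (by omega)
    · have hdec := psi_decomp hk_le n0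
      have hdlt := delta_lt hk_le n0
      rw [hg0] at hdec
      simp only [Nat.cast_zero, zero_div, zero_add] at hdec
      rw [hdec, einv4] at *
      linarith
  · obtain ⟨n, hn, rfl⟩ := himg
    simp only [Set.mem_setOf_eq] at hn
    set w := grayN k (n % 2 ^ k) with hwdef
    have hw : w < 2 ^ k := grayN_lt _ _
    have hdec := psi_decomp hk_le n
    rw [← hwdef] at hdec
    have hd0 := delta_nonneg m k n
    have hdlt := delta_lt hk_le n
    by_cases hw1 : w + 1 < 2 ^ k
    · obtain ⟨n', hn', hg'⟩ := gray_surj k a hw1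
      have hdec' := psi_decomp hk_le n'
      rw [hg'] at hdec'
      have hd0' := delta_nonneg m k n'
      have hq1 : n / 2 ^ k ≤ n' / 2 ^ k + 1 := by
        have hle : n ≤ n' + 2 ^ k := by omega
        have := Nat.div_le_div_right (c := 2 ^ k) hle
        rwa [Nat.add_div_right _ (by positivity)] at this
      have hq2 : n' / 2 ^ k ≤ n / 2 ^ k + 1 := by
        have hle : n' ≤ n + 2 ^ k := by omega
        have := Nat.div_le_div_right (c := 2 ^ k) hle
        rwa [Nat.add_div_right _ (by positivity)] at this
      have hcomp := delta_comp m k n n' hkm' hq1 hq2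
      refine ⟨psiMap m n', ?_, ?_, ?_⟩
      · rw [hS]; right; exact ⟨n', ⟨hn'.1, hn'.2⟩, rfl⟩
      · show psiMap m n < psiMap m n'
        rw [hdec, hdec']
        push_cast
        have e0 : ((w:ℝ) + 1) / 2 ^ k = (w:ℝ) / 2 ^ k + ((2:ℝ)^k)⁻¹ := by
          field_simp
        rw [e0]
        linarith
      · show psiMap m n' ≤ psiMap m n + 7 / (2:ℝ) ^ (k+2)
        rw [hdec, hdec']
        push_cast
        have e1 : ((w:ℝ) + 1) / 2 ^ k = (w:ℝ) / 2 ^ k + ((2:ℝ)^k)⁻¹ := by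
          field_simp
        rw [e1, einv4]
        have hsum : 4/(2:ℝ)^(k+2) + 3/(2:ℝ)^(k+2) = 7/(2:ℝ)^(k+2) := by ring
        linarith
    · -- w = 2^k - 1 : use y = 1
      refine ⟨1, h1S, hx1, ?_⟩
      show (1:ℝ) ≤ psiMap m n + 7 / (2:ℝ) ^ (k+2)
      have hwe : (w:ℝ) = 2 ^ k - 1 := by
        have : w = 2 ^ k - 1 := by omega
        rw [this]
        push_cast [Nat.one_le_two_pow]
        ring
      have hxge : (2:ℝ)^k / 2 ^ k - ((2:ℝ)^k)⁻¹ ≤ psiMap m n := by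
        rw [hdec, hwe]
        have : ((2:ℝ) ^ k - 1) / 2 ^ k = 2 ^ k / 2 ^ k - ((2:ℝ)^k)⁻¹ := by
          field_simp
        linarith
      rw [div_self (ne_of_gt hpk)] at hxge
      rw [einv4] at hxge
      linarith

/-- For a set `A` of `2^k` consecutive integers in `{1,…,2^m−1}` with
`k ∈ {1,…,m−1}`, every gap of `ψ(A) ∪ {0,1}` is at most `7/2^{k+2}`. -/
theorem psi_gap_A (m k a : ℕ) (hm : 2 ≤ m) (hk1 : 1 ≤ k) (hkm : k ≤ m - 1)
    (ha1 : 1 ≤ a) (ha2 : a + 2 ^ k ≤ 2 ^ m) (S : Set ℝ)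
    (hS : S = {0, 1} ∪ (fun n => psiMap m n) '' {n : ℕ | a ≤ n ∧ n < a + 2 ^ k}) :
    ∀ t₁ ∈ S, ∀ t₂ ∈ S, t₁ < t₂ → (∀ t ∈ S, ¬(t₁ < t ∧ t < t₂)) →
      t₂ - t₁ ≤ 7 / (2 : ℝ) ^ (k + 2) := by
  intro t₁ ht₁ t₂ ht₂ hlt hgap
  have hSle : ∀ t ∈ S, t ≤ 1 := by
    intro t ht
    rw [hS] at ht
    rcases ht with h | h
    · simp only [Set.mem_insert_iff, Set.mem_singleton_iff] at h
      rcases h with rfl | rfl <;> norm_num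
    · obtain ⟨n, _, rfl⟩ := h
      exact le_of_lt (psi_lt_one m n)
  have ht1lt : t₁ < 1 := lt_of_lt_of_le hlt (hSle t₂ ht₂)
  obtain ⟨y, hyS, hy1, hy2⟩ := key m k a hm hk1 hkm ha1 ha2 S hS t₁ ht₁ ht1lt
  by_contra hc
  push_neg at hc
  exact hgap y hyS ⟨hy1, by linarith⟩
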